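/- Let R be a 2,3-torsion free alternative ring with nontrivial idempotent e1 satisfying conditions (1)-(3) as in the Peirce decomposition setting. If a11 ∈ R11, a22 ∈ R22 and [a11 + a22, x] = 0 for all x ∈ R21, then a11 + a22 ∈ Z(R). -/

import Mathlib

/-- Peirce idempotents: `pe e1 0 = e1`, `pe e1 1 = 1 - e1`. -/
def pe {R : Type*} [NonAssocRing R] (e1 : R) : Fin 2 → R := ![e1, 1 - e1]

/-- Membership in the Peirce component `R_{ij} = e_i R e_j`. -/
def InP {R : Type*} [NonAssocRing R] (e1 : R) (i j : Fin 2) (x : R) : Prop :=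
  ∃ r : R, x = pe e1 i * r * pe e1 j

/-- Condition (1): `x_{ij} R_{ji} = 0 ⟹ x_{ij} = 0` for `i ≠ j`. -/
def Cond1 {R : Type*} [NonAssocRing R] (e1 : R) : Prop :=
  ∀ i j : Fin 2, i ≠ j → ∀ x : R, InP e1 i j x →
    (∀ y : R, InP e1 j i y → x * y = 0) → x = 0

/-- Condition (2): `x_{11} R_{12} = 0` or `R_{21} x_{11} = 0` implies `x_{11} = 0`. -/
def Cond2 {R : Type*} [NonAssocRing R] (e1 : R) : Prop :=
  ∀ x : R, InP e1 0 0 x →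
    ((∀ y : R, InP e1 0 1 y → x * y = 0) ∨ (∀ y : R, InP e1 1 0 y → y * x = 0)) → x = 0

/-- Condition (3): `R_{12} x_{22} = 0` or `x_{22} R_{21} = 0` implies `x_{22} = 0`. -/
def Cond3 {R : Type*} [NonAssocRing R] (e1 : R) : Prop :=
  ∀ x : R, InP e1 1 1 x →
    ((∀ y : R, InP e1 0 1 y → y * x = 0) ∨ (∀ y : R, InP e1 1 0 y → x * y = 0)) → x = 0

namespace AltCentralAux

variable {R : Type*} [NonAssocRing R]

/-- The associator. -/
def aso (x y z : R) : R := x * y * z - x * (y * z)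

theorem aso_assoc {u v w : R} (h : aso u v w = 0) : u * v * w = u * (v * w) :=
  sub_eq_zero.mp h

theorem aso_xx (h1 : ∀ x y : R, x * x * y = x * (x * y)) (x y : R) : aso x x y = 0 :=
  sub_eq_zero.mpr (h1 x y)

theorem aso_yy (h2alt : ∀ x y : R, y * x * x = y * (x * x)) (x y : R) : aso x y y = 0 :=
  sub_eq_zero.mpr (h2alt y x)

theorem aso_add1 (x x' y z : R) : aso (x + x') y z = aso x y z + aso x' y z := by
  simp only [aso, add_mul, mul_add]; abel

theorem aso_add2 (x y y' z : R) : aso x (y + y') z = aso x y z + aso x y' z := by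
  simp only [aso, add_mul, mul_add]; abel

theorem aso_add3 (x y z z' : R) : aso x y (z + z') = aso x y z + aso x y z' := by
  simp only [aso, add_mul, mul_add]; abel

theorem aso_sub1 (x x' y z : R) : aso (x - x') y z = aso x y z - aso x' y z := by
  simp only [aso, sub_mul, mul_sub]; abel

theorem aso_sub3 (x y z z' : R) : aso x y (z - z') = aso x y z - aso x y z' := by
  simp only [aso, sub_mul, mul_sub]; abel

theorem aso_one1 (x y : R) : aso (1:R) x y = 0 := by simp [aso]

theorem aso_one3 (x y : R) : aso x y (1:R) = 0 := by simp [aso]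

theorem aso_swap12 (h1 : ∀ x y : R, x * x * y = x * (x * y)) (x y z : R) :
    aso y x z = - aso x y z := by
  have h := aso_xx h1 (x + y) z
  rw [aso_add1, aso_add2, aso_add2, aso_xx h1, aso_xx h1, zero_add, add_zero] at h
  exact eq_neg_of_add_eq_zero_right h

theorem aso_swap23 (h2alt : ∀ x y : R, y * x * x = y * (x * x)) (x y z : R) :
    aso x z y = - aso x y z := by
  have h := aso_yy h2alt x (y + z)
  rw [aso_add2, aso_add3, aso_add3, aso_yy h2alt, aso_yy h2alt, zero_add, add_zero] at h
  exact eq_neg_of_add_eq_zero_right h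

theorem aso_cyc (h1 : ∀ x y : R, x * x * y = x * (x * y))
    (h2alt : ∀ x y : R, y * x * x = y * (x * x)) (x y z : R) :
    aso x y z = aso y z x := by
  have a := aso_swap12 h1 x y z
  have b := aso_swap23 h2alt y x z
  rw [a, neg_neg] at b
  exact b.symm

theorem aso_flex (h1 : ∀ x y : R, x * x * y = x * (x * y))
    (h2alt : ∀ x y : R, y * x * x = y * (x * x)) (x y : R) : aso x y x = 0 := by
  rw [aso_swap12 h1 y x x, aso_yy h2alt, neg_zero]

/-- Left absorption trick. -/
theorem zeroL (h1 : ∀ x y : R, x * x * y = x * (x * y))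
    (h2alt : ∀ x y : R, y * x * x = y * (x * x))
    (htf : ∀ x : R, (2 : ℕ) • x = 0 → x = 0)
    (e x y : R) (he : e * e = e) (hex : e * x = x) (hxe : x * e = x) (hey : e * y = 0) :
    x * y = 0 := by
  have hxey : aso x e y = x * y := by
    simp only [aso, hxe, hey, mul_zero, sub_zero]
  have h' : x * y - e * (x * y) = -(x * y) := by
    have hs := aso_swap12 h1 x e y
    rw [hxey] at hs
    simpa only [aso, hex] using hs
  have hexy : e * (x * y) = x * y + x * y := by
    calc e * (x * y) = x * y - (x * y - e * (x * y)) := by abel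
    _ = x * y - -(x * y) := by rw [h']
    _ = x * y + x * y := by rw [sub_neg_eq_add]
  have h4 := h1 e (x * y)
  rw [he, hexy, mul_add, hexy] at h4
  have h5 : x * y + x * y = 0 := left_eq_add.mp h4
  exact htf _ (by rw [two_nsmul]; exact h5)

/-- Right absorption trick. -/
theorem zeroR (h1 : ∀ x y : R, x * x * y = x * (x * y))
    (h2alt : ∀ x y : R, y * x * x = y * (x * x))
    (htf : ∀ x : R, (2 : ℕ) • x = 0 → x = 0)
    (e x y : R) (he : e * e = e) (hxe0 : x * e = 0) (hey : e * y = y) (hye : y * e = y) :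
    x * y = 0 := by
  have hxey : aso x e y = -(x * y) := by
    simp only [aso, hxe0, hey, zero_mul, zero_sub]
  have hxye : aso x y e = x * y := by
    rw [aso_swap23 h2alt x e y, hxey, neg_neg]
  have h' : (x * y) * e = x * y + x * y := by
    have hh : x * y * e - x * (y * e) = x * y := hxye
    rw [hye] at hh
    calc (x * y) * e = (x * y * e - x * y) + x * y := by abel
    _ = x * y + x * y := by rw [hh]
  have h4 := h2alt e (x * y)
  rw [he, h', add_mul, h'] at h4
  have h5 : x * y + x * y = 0 := add_eq_left.mp h4
  exact htf _ (by rw [two_nsmul]; exact h5)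

/-- Matched products stay in components. -/
theorem mulP (h1 : ∀ x y : R, x * x * y = x * (x * y))
    (h2alt : ∀ x y : R, y * x * x = y * (x * x))
    (f k x y : R) (hfx : f * x = x) (hyk : y * k = y)
    (hf : (x * f = x ∧ f * y = y) ∨ (x * f = 0 ∧ f * y = 0))
    (hk : (x * k = x ∧ k * y = y) ∨ (x * k = 0 ∧ k * y = 0)) :
    f * (x * y) = x * y ∧ (x * y) * k = x * y := by
  have hA1 : aso x f y = 0 := by
    rcases hf with ⟨u1, u2⟩ | ⟨u1, u2⟩ <;> simp [aso, u1, u2]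
  have hA2 : aso x k y = 0 := by
    rcases hk with ⟨u1, u2⟩ | ⟨u1, u2⟩ <;> simp [aso, u1, u2]
  constructor
  · have hs : aso f x y = 0 := by rw [aso_swap12 h1 x f y, hA1, neg_zero]
    have := aso_assoc hs
    rw [hfx] at this
    exact this.symm
  · have hs : aso x y k = 0 := by rw [aso_swap23 h2alt x k y, hA2, neg_zero]
    have := aso_assoc hs
    rw [hyk] at this
    exact this

theorem compl_l {e x : R} (h : e * x = x) : (1 - e) * x = 0 := by
  rw [sub_mul, one_mul, h, sub_self]

theorem compl_r {e x : R} (h : x * e = x) : x * (1 - e) = 0 := by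
  rw [mul_sub, mul_one, h, sub_self]

theorem compl_l' {e x : R} (h : (1 - e) * x = x) : e * x = 0 := by
  have := compl_l h
  rwa [sub_sub_cancel] at this

theorem compl_r' {e x : R} (h : x * (1 - e) = x) : x * e = 0 := by
  have := compl_r h
  rwa [sub_sub_cancel] at this

theorem pe0 (e1 : R) : pe e1 0 = e1 := by simp [pe]
theorem pe1 (e1 : R) : pe e1 1 = 1 - e1 := by simp [pe]

theorem aso_e_s_f (h1 : ∀ x y : R, x * x * y = x * (x * y))
    (h2alt : ∀ x y : R, y * x * x = y * (x * x)) (e1 s : R) :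
    aso e1 s (1 - e1) = 0 := by
  rw [aso_sub3, aso_one3, aso_flex h1 h2alt, sub_zero]

theorem aso_f_s_e (h1 : ∀ x y : R, x * x * y = x * (x * y))
    (h2alt : ∀ x y : R, y * x * x = y * (x * x)) (e1 s : R) :
    aso (1 - e1) s e1 = 0 := by
  rw [aso_sub1, aso_one1, aso_flex h1 h2alt, sub_zero]

theorem he2' {e1 : R} (he : e1 * e1 = e1) : (1 - e1) * (1 - e1) = 1 - e1 := by
  rw [mul_sub, mul_one, sub_mul, one_mul, he, sub_self, sub_zero]

theorem facts00 (h1 : ∀ x y : R, x * x * y = x * (x * y))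
    (h2alt : ∀ x y : R, y * x * x = y * (x * x))
    {e1 : R} (he : e1 * e1 = e1) {x : R} (h : InP e1 0 0 x) :
    e1 * x = x ∧ x * e1 = x := by
  obtain ⟨r, rfl⟩ := h
  rw [pe0]
  have h'' : e1 * (e1 * r) = e1 * r := by rw [← h1 e1 r, he]
  constructor
  · have h' := aso_assoc (aso_flex h1 h2alt e1 (e1 * r))
    rw [← h', h'']
  · have := h2alt e1 (e1 * r)
    rw [he] at this
    exact this

theorem facts01 (h1 : ∀ x y : R, x * x * y = x * (x * y))
    (h2alt : ∀ x y : R, y * x * x = y * (x * x))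
    {e1 : R} (he : e1 * e1 = e1) {x : R} (h : InP e1 0 1 x) :
    e1 * x = x ∧ x * (1 - e1) = x := by
  obtain ⟨r, rfl⟩ := h
  rw [pe0, pe1]
  have h'' : e1 * (e1 * r) = e1 * r := by rw [← h1 e1 r, he]
  constructor
  · have h' := aso_assoc (aso_e_s_f h1 h2alt e1 (e1 * r))
    rw [← h', h'']
  · have := h2alt (1 - e1) (e1 * r)
    rw [he2' he] at this
    exact this

theorem facts10 (h1 : ∀ x y : R, x * x * y = x * (x * y))
    (h2alt : ∀ x y : R, y * x * x = y * (x * x))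
    {e1 : R} (he : e1 * e1 = e1) {x : R} (h : InP e1 1 0 x) :
    (1 - e1) * x = x ∧ x * e1 = x := by
  obtain ⟨r, rfl⟩ := h
  rw [pe0, pe1]
  have h'' : (1 - e1) * ((1 - e1) * r) = (1 - e1) * r := by
    rw [← h1 (1 - e1) r, he2' he]
  constructor
  · have h' := aso_assoc (aso_f_s_e h1 h2alt e1 ((1 - e1) * r))
    rw [← h', h'']
  · have := h2alt e1 ((1 - e1) * r)
    rw [he] at this
    exact this

theorem facts11 (h1 : ∀ x y : R, x * x * y = x * (x * y))
    (h2alt : ∀ x y : R, y * x * x = y * (x * x))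
    {e1 : R} (he : e1 * e1 = e1) {x : R} (h : InP e1 1 1 x) :
    (1 - e1) * x = x ∧ x * (1 - e1) = x := by
  obtain ⟨r, rfl⟩ := h
  rw [pe1]
  have h'' : (1 - e1) * ((1 - e1) * r) = (1 - e1) * r := by
    rw [← h1 (1 - e1) r, he2' he]
  constructor
  · have h' := aso_assoc (aso_flex h1 h2alt (1 - e1) ((1 - e1) * r))
    rw [← h', h'']
  · have := h2alt (1 - e1) ((1 - e1) * r)
    rw [he2' he] at this
    exact this

end AltCentralAux

open AltCentralAux in
/-- if $[a_{11}+a_{22}, R_{21}] = 0$ then $a_{11}+a_{22}$ is central. -/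
theorem central_of_comm_R21 (R : Type*) [NonAssocRing R]
    (hAlt1 : ∀ x y : R, x * x * y = x * (x * y))
    (hAlt2 : ∀ x y : R, y * x * x = y * (x * x))
    (h2 : ∀ x : R, (2 : ℕ) • x = 0 → x = 0)
    (h3 : ∀ x : R, (3 : ℕ) • x = 0 → x = 0)
    (e1 : R) (he : e1 * e1 = e1) (he0 : e1 ≠ 0) (he1 : e1 ≠ 1)
    (hc1 : Cond1 e1) (hc2 : Cond2 e1) (hc3 : Cond3 e1)
    (a11 a22 : R) (ha11 : InP e1 0 0 a11) (ha22 : InP e1 1 1 a22)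
    (hcomm : ∀ x : R, InP e1 1 0 x → (a11 + a22) * x - x * (a11 + a22) = 0) :
    a11 + a22 ∈ Set.center R := by
  have hpe0 : pe e1 0 = e1 := pe0 e1
  have hpe1 : pe e1 1 = 1 - e1 := pe1 e1
  have hE2 : (1 - e1) * (1 - e1) = 1 - e1 := he2' he
  obtain ⟨ha11l, ha11r⟩ := facts00 hAlt1 hAlt2 he ha11
  obtain ⟨ha22l, ha22r⟩ := facts11 hAlt1 hAlt2 he ha22
  have ha11l2 : (1 - e1) * a11 = 0 := compl_l ha11l
  have ha11r2 : a11 * (1 - e1) = 0 := compl_r ha11r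
  have ha22l1 : e1 * a22 = 0 := compl_l' ha22l
  have ha22r1 : a22 * e1 = 0 := compl_r' ha22r
  -- the hypothesis in component form : a22 * y = y * a11 for y ∈ R21
  have hstar : ∀ y : R, (1 - e1) * y = y → y * e1 = y → a22 * y = y * a11 := by
    intro y hy1 hy2
    have hInP : InP e1 1 0 y := ⟨y, by rw [hpe1, hpe0, hy1, hy2]⟩
    have h := hcomm y hInP
    have hz1 : a11 * y = 0 := zeroL hAlt1 hAlt2 h2 e1 a11 y he ha11l ha11r (compl_l' hy1)
    have hz2 : y * a22 = 0 :=
      zeroR hAlt1 hAlt2 h2 (1 - e1) y a22 hE2 (compl_r hy2) ha22l ha22r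
    rw [add_mul, mul_add, hz1, hz2, zero_add, add_zero] at h
    exact sub_eq_zero.mp h
  -- Claim A : a11 commutes with R11
  have claimA : ∀ s : R, e1 * s = s → s * e1 = s → a11 * s = s * a11 := by
    intro s hs1 hs2
    have hm1 := mulP hAlt1 hAlt2 e1 e1 a11 s ha11l hs2
      (Or.inl ⟨ha11r, hs1⟩) (Or.inl ⟨ha11r, hs1⟩)
    have hm2 := mulP hAlt1 hAlt2 e1 e1 s a11 hs1 ha11r
      (Or.inl ⟨hs2, ha11l⟩) (Or.inl ⟨hs2, ha11l⟩)
    have hd1 : e1 * (a11 * s - s * a11) = a11 * s - s * a11 := by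
      rw [mul_sub, hm1.1, hm2.1]
    have hd2 : (a11 * s - s * a11) * e1 = a11 * s - s * a11 := by
      rw [sub_mul, hm1.2, hm2.2]
    have hInP : InP e1 0 0 (a11 * s - s * a11) := ⟨_, by rw [hpe0, hd1, hd2]⟩
    have hz : a11 * s - s * a11 = 0 := by
      refine hc2 _ hInP (Or.inr ?_)
      intro y hy
      obtain ⟨hy1, hy2⟩ := facts10 hAlt1 hAlt2 he hy
      have hya := mulP hAlt1 hAlt2 (1 - e1) e1 y a11 hy1 ha11r
        (Or.inr ⟨compl_r hy2, ha11l2⟩) (Or.inl ⟨hy2, ha11l⟩)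
      have hys := mulP hAlt1 hAlt2 (1 - e1) e1 y s hy1 hs2
        (Or.inr ⟨compl_r hy2, compl_l hs1⟩) (Or.inl ⟨hy2, hs1⟩)
      have z1 : s * y = 0 := zeroL hAlt1 hAlt2 h2 e1 s y he hs1 hs2 (compl_l' hy1)
      have z2 : s * (y * a11) = 0 :=
        zeroL hAlt1 hAlt2 h2 e1 s (y * a11) he hs1 hs2 (compl_l' hya.1)
      have z3 : y * a22 = 0 :=
        zeroR hAlt1 hAlt2 h2 (1 - e1) y a22 hE2 (compl_r hy2) ha22l ha22r
      have z4 : a22 * s = 0 :=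
        zeroL hAlt1 hAlt2 h2 (1 - e1) a22 s hE2 ha22l ha22r (compl_l hs1)
      have A1 : aso s y a11 = 0 := by simp [aso, z1, z2]
      have A1' : aso y a11 s = 0 := by
        rw [← aso_cyc hAlt1 hAlt2 s y a11]; exact A1
      have A2 : aso y a22 s = 0 := by simp [aso, z3, z4]
      have A2' : aso a22 y s = 0 := by
        rw [aso_swap12 hAlt1 y a22 s, A2, neg_zero]
      have A3 : aso y s a11 = 0 := by
        rw [← aso_cyc hAlt1 hAlt2 a11 y s, aso_swap12 hAlt1 y a11 s, A1', neg_zero]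
      have q1 : y * (a11 * s) = y * a11 * s := (aso_assoc A1').symm
      have q2 : y * a11 * s = a22 * y * s := by rw [hstar y hy1 hy2]
      have q3 : a22 * y * s = a22 * (y * s) := aso_assoc A2'
      have q4 : a22 * (y * s) = y * s * a11 := hstar (y * s) hys.1 hys.2
      have q5 : y * (s * a11) = y * s * a11 := (aso_assoc A3).symm
      rw [mul_sub, q1, q2, q3, q4, q5, sub_self]
    exact sub_eq_zero.mp hz
  -- Claim B : a11 * t = t * a22 for t ∈ R12
  have claimB : ∀ t : R, e1 * t = t → t * (1 - e1) = t → a11 * t = t * a22 := by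
    intro t ht1 ht2
    have hm1 := mulP hAlt1 hAlt2 e1 (1 - e1) a11 t ha11l ht2
      (Or.inl ⟨ha11r, ht1⟩) (Or.inr ⟨ha11r2, compl_l ht1⟩)
    have hm2 := mulP hAlt1 hAlt2 e1 (1 - e1) t a22 ht1 ha22r
      (Or.inr ⟨compl_r' ht2, ha22l1⟩) (Or.inl ⟨ht2, ha22l⟩)
    have hd1 : e1 * (a11 * t - t * a22) = a11 * t - t * a22 := by
      rw [mul_sub, hm1.1, hm2.1]
    have hd2 : (a11 * t - t * a22) * (1 - e1) = a11 * t - t * a22 := by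
      rw [sub_mul, hm1.2, hm2.2]
    have hInP : InP e1 0 1 (a11 * t - t * a22) := ⟨_, by rw [hpe0, hpe1, hd1, hd2]⟩
    have hz : a11 * t - t * a22 = 0 := by
      refine hc1 0 1 (by decide) _ hInP ?_
      intro y hy
      obtain ⟨hy1, hy2⟩ := facts10 hAlt1 hAlt2 he hy
      have hty := mulP hAlt1 hAlt2 e1 e1 t y ht1 hy2
        (Or.inr ⟨compl_r' ht2, compl_l' hy1⟩) (Or.inr ⟨compl_r' ht2, compl_l' hy1⟩)
      have zb1 : t * a11 = 0 :=
        zeroR hAlt1 hAlt2 h2 e1 t a11 he (compl_r' ht2) ha11l ha11r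
      have zb2 : a11 * y = 0 :=
        zeroL hAlt1 hAlt2 h2 e1 a11 y he ha11l ha11r (compl_l' hy1)
      have zb3 : a22 * t = 0 :=
        zeroL hAlt1 hAlt2 h2 (1 - e1) a22 t hE2 ha22l ha22r (compl_l ht1)
      have zb4 : a22 * (t * y) = 0 :=
        zeroL hAlt1 hAlt2 h2 (1 - e1) a22 (t * y) hE2 ha22l ha22r (compl_l hty.1)
      have B1 : aso t a11 y = 0 := by simp [aso, zb1, zb2]
      have B1' : aso a11 t y = 0 := by
        rw [aso_swap12 hAlt1 t a11 y, B1, neg_zero]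
      have B1'' : aso t y a11 = 0 := by
        rw [← aso_cyc hAlt1 hAlt2 a11 t y]; exact B1'
      have B2 : aso a22 t y = 0 := by simp [aso, zb3, zb4]
      have B2' : aso t a22 y = 0 := by
        rw [aso_swap12 hAlt1 a22 t y, B2, neg_zero]
      have q1 : a11 * t * y = a11 * (t * y) := aso_assoc B1'
      have q2 : t * a22 * y = t * (a22 * y) := aso_assoc B2'
      have q3 : a22 * y = y * a11 := hstar y hy1 hy2
      have q4 : t * (y * a11) = t * y * a11 := (aso_assoc B1'').symm
      have q5 : a11 * (t * y) = t * y * a11 := claimA (t * y) hty.1 hty.2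
      rw [sub_mul, q1, q2, q3, q4, q5, sub_self]
    exact sub_eq_zero.mp hz
  -- Claim C : a22 commutes with R22
  have claimC : ∀ s : R, (1 - e1) * s = s → s * (1 - e1) = s → a22 * s = s * a22 := by
    intro s hs1 hs2
    have hm1 := mulP hAlt1 hAlt2 (1 - e1) (1 - e1) a22 s ha22l hs2
      (Or.inl ⟨ha22r, hs1⟩) (Or.inl ⟨ha22r, hs1⟩)
    have hm2 := mulP hAlt1 hAlt2 (1 - e1) (1 - e1) s a22 hs1 ha22r
      (Or.inl ⟨hs2, ha22l⟩) (Or.inl ⟨hs2, ha22l⟩)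
    have hd1 : (1 - e1) * (a22 * s - s * a22) = a22 * s - s * a22 := by
      rw [mul_sub, hm1.1, hm2.1]
    have hd2 : (a22 * s - s * a22) * (1 - e1) = a22 * s - s * a22 := by
      rw [sub_mul, hm1.2, hm2.2]
    have hInP : InP e1 1 1 (a22 * s - s * a22) := ⟨_, by rw [hpe1, hd1, hd2]⟩
    have hz : a22 * s - s * a22 = 0 := by
      refine hc3 _ hInP (Or.inl ?_)
      intro t ht
      obtain ⟨ht1, ht2⟩ := facts01 hAlt1 hAlt2 he ht
      have hts := mulP hAlt1 hAlt2 e1 (1 - e1) t s ht1 hs2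
        (Or.inr ⟨compl_r' ht2, compl_l' hs1⟩) (Or.inl ⟨ht2, hs1⟩)
      have hta := mulP hAlt1 hAlt2 e1 (1 - e1) t a22 ht1 ha22r
        (Or.inr ⟨compl_r' ht2, ha22l1⟩) (Or.inl ⟨ht2, ha22l⟩)
      have zc1 : s * t = 0 :=
        zeroL hAlt1 hAlt2 h2 (1 - e1) s t hE2 hs1 hs2 (compl_l ht1)
      have zc2 : s * (t * a22) = 0 :=
        zeroL hAlt1 hAlt2 h2 (1 - e1) s (t * a22) hE2 hs1 hs2 (compl_l hta.1)
      have zc3 : t * a11 = 0 :=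
        zeroR hAlt1 hAlt2 h2 e1 t a11 he (compl_r' ht2) ha11l ha11r
      have zc4 : a11 * s = 0 :=
        zeroL hAlt1 hAlt2 h2 e1 a11 s he ha11l ha11r (compl_l' hs1)
      have C1 : aso s t a22 = 0 := by simp [aso, zc1, zc2]
      have C1' : aso t a22 s = 0 := by
        rw [← aso_cyc hAlt1 hAlt2 s t a22]; exact C1
      have C2 : aso t a11 s = 0 := by simp [aso, zc3, zc4]
      have C2' : aso a11 t s = 0 := by
        rw [aso_swap12 hAlt1 t a11 s, C2, neg_zero]
      have C3 : aso t s a22 = 0 := by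
        rw [← aso_cyc hAlt1 hAlt2 a22 t s, aso_swap12 hAlt1 t a22 s, C1', neg_zero]
      have r1 : t * (a22 * s) = t * a22 * s := (aso_assoc C1').symm
      have r2 : t * a22 * s = a11 * t * s := by rw [← claimB t ht1 ht2]
      have r3 : a11 * t * s = a11 * (t * s) := aso_assoc C2'
      have r4 : a11 * (t * s) = t * s * a22 := claimB (t * s) hts.1 hts.2
      have r5 : t * (s * a22) = t * s * a22 := (aso_assoc C3).symm
      rw [mul_sub, r1, r2, r3, r4, r5, sub_self]
    exact sub_eq_zero.mp hz
  -- full commutation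
  have hcom : ∀ g : R, (a11 + a22) * g = g * (a11 + a22) := by
    intro g
    have hone : e1 + (1 - e1) = (1 : R) := by abel
    have hg : g = e1 * g * e1 + e1 * g * (1 - e1) + (1 - e1) * g * e1
        + (1 - e1) * g * (1 - e1) := by
      calc g = (e1 + (1 - e1)) * g := by rw [hone, one_mul]
      _ = e1 * g + (1 - e1) * g := add_mul _ _ _
      _ = (e1 * g) * (e1 + (1 - e1)) + ((1 - e1) * g) * (e1 + (1 - e1)) := by
          rw [hone, mul_one, mul_one]
      _ = (e1 * g * e1 + e1 * g * (1 - e1))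
          + ((1 - e1) * g * e1 + (1 - e1) * g * (1 - e1)) := by rw [mul_add, mul_add]
      _ = _ := by abel
    obtain ⟨f11l, f11r⟩ := facts00 hAlt1 hAlt2 he (⟨g, by rw [hpe0]⟩ : InP e1 0 0 (e1 * g * e1))
    obtain ⟨f12l, f12r⟩ := facts01 hAlt1 hAlt2 he
      (⟨g, by rw [hpe0, hpe1]⟩ : InP e1 0 1 (e1 * g * (1 - e1)))
    obtain ⟨f21l, f21r⟩ := facts10 hAlt1 hAlt2 he
      (⟨g, by rw [hpe0, hpe1]⟩ : InP e1 1 0 ((1 - e1) * g * e1))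
    obtain ⟨f22l, f22r⟩ := facts11 hAlt1 hAlt2 he
      (⟨g, by rw [hpe1]⟩ : InP e1 1 1 ((1 - e1) * g * (1 - e1)))
    have c11 : (a11 + a22) * (e1 * g * e1) = (e1 * g * e1) * (a11 + a22) := by
      have u1 : a22 * (e1 * g * e1) = 0 :=
        zeroL hAlt1 hAlt2 h2 (1 - e1) a22 _ hE2 ha22l ha22r (compl_l f11l)
      have u2 : (e1 * g * e1) * a22 = 0 :=
        zeroL hAlt1 hAlt2 h2 e1 _ a22 he f11l f11r ha22l1
      rw [add_mul, mul_add, u1, u2, add_zero, add_zero, claimA _ f11l f11r]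
    have c12 : (a11 + a22) * (e1 * g * (1 - e1)) = (e1 * g * (1 - e1)) * (a11 + a22) := by
      have u1 : a22 * (e1 * g * (1 - e1)) = 0 :=
        zeroL hAlt1 hAlt2 h2 (1 - e1) a22 _ hE2 ha22l ha22r (compl_l f12l)
      have u2 : (e1 * g * (1 - e1)) * a11 = 0 :=
        zeroR hAlt1 hAlt2 h2 e1 _ a11 he (compl_r' f12r) ha11l ha11r
      rw [add_mul, mul_add, u1, u2, add_zero, zero_add, claimB _ f12l f12r]
    have c21 : (a11 + a22) * ((1 - e1) * g * e1) = ((1 - e1) * g * e1) * (a11 + a22) :=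
      sub_eq_zero.mp (hcomm _ ⟨g, by rw [hpe0, hpe1]⟩)
    have c22 : (a11 + a22) * ((1 - e1) * g * (1 - e1))
        = ((1 - e1) * g * (1 - e1)) * (a11 + a22) := by
      have u1 : a11 * ((1 - e1) * g * (1 - e1)) = 0 :=
        zeroL hAlt1 hAlt2 h2 e1 a11 _ he ha11l ha11r (compl_l' f22l)
      have u2 : ((1 - e1) * g * (1 - e1)) * a11 = 0 :=
        zeroL hAlt1 hAlt2 h2 (1 - e1) _ a11 hE2 f22l f22r (compl_l ha11l)
      rw [add_mul, mul_add, u1, u2, zero_add, zero_add, claimC _ f22l f22r]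
    conv_lhs => rw [hg]
    conv_rhs => rw [hg]
    rw [mul_add, mul_add, mul_add, c11, c12, c21, c22, add_mul, add_mul, add_mul]
  -- nuclearity via 3-torsion-freeness
  have hnuc : ∀ x y : R, aso x y (a11 + a22) = 0 := by
    intro x y
    have hid : aso x y (a11 + a22) - aso x (a11 + a22) y + aso (a11 + a22) x y
        = (x * y) * (a11 + a22) - (a11 + a22) * (x * y)
          - (x * (y * (a11 + a22)) - x * ((a11 + a22) * y))
          - ((x * (a11 + a22)) * y - ((a11 + a22) * x) * y) := by
      simp only [aso]; abel
    have h0 : aso x y (a11 + a22) - aso x (a11 + a22) y + aso (a11 + a22) x y = 0 := by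
      rw [hid, ← hcom (x * y), ← hcom y, ← hcom x]
      abel
    rw [aso_swap23 hAlt2 x y (a11 + a22), aso_cyc hAlt1 hAlt2 (a11 + a22) x y,
      sub_neg_eq_add] at h0
    refine h3 _ ?_
    have h3s : (3 : ℕ) • aso x y (a11 + a22)
        = aso x y (a11 + a22) + aso x y (a11 + a22) + aso x y (a11 + a22) := by
      rw [show (3 : ℕ) = 1 + 1 + 1 from rfl, add_nsmul, add_nsmul, one_nsmul]
    rw [h3s]
    exact h0
  rw [Set.mem_center_iff]
  refine ⟨fun g => hcom g, ?_, ?_⟩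
  · intro b c
    have : aso (a11 + a22) b c = 0 := by
      rw [aso_cyc hAlt1 hAlt2 (a11 + a22) b c]
      exact hnuc b c
    exact (aso_assoc this).symm
  · intro b c
    exact aso_assoc (hnuc b c)
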